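/- Let G be a densely ordered abelian group (for all x < y in G there is z ∈ G with x < z < y). Suppose there exist n ∈ ℕ and a convex subgroup C of G such that C is n-regular but not n-divisible (some element of C is not of the form n·z with z ∈ C). Then there exists a ∈ G such that a is not n-divisible in G and for every c ∈ G with c > 0 there exists g ∈ G with |a − n·g| < c; in particular, G is not closed in its divisible hull. -/

import Mathlib

theorem stmt4 {G : Type*} [AddCommGroup G] [LinearOrder G] [IsOrderedAddMonoid G] [DenselyOrdered G]
    (n : ℕ) (hn : 0 < n) (C : AddSubgroup G)
    (hconv : ∀ c ∈ C, ∀ g : G, 0 ≤ g → g ≤ c → g ∈ C)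
    (hreg : ∀ S : Set G, S ⊆ (C : Set G) → S.Infinite →
      (∀ x ∈ S, ∀ y ∈ S, ∀ z ∈ C, x ≤ z → z ≤ y → z ∈ S) →
      ∃ s ∈ S, ∃ z ∈ C, s = n • z)
    (hndiv : ∃ c ∈ C, ¬ ∃ z ∈ C, c = n • z) :
    ∃ a : G, (¬ ∃ h : G, a = n • h) ∧ ∀ c : G, 0 < c → ∃ g : G, |a - n • g| < c := by
  obtain ⟨a, haC, hand⟩ := hndiv
  have habsC : |a| ∈ C := by
    rcases abs_choice a with h1 | h1
    · rw [h1]; exact haC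
    · rw [h1]; exact neg_mem haC
  have absmem : ∀ x : G, |x| ∈ C → x ∈ C := by
    intro x hx
    rcases abs_choice x with h1 | h1
    · rw [← h1]; exact hx
    · have := neg_mem hx
      rw [h1, neg_neg] at this
      exact this
  refine ⟨a, ?_, ?_⟩
  · rintro ⟨h, hh⟩
    apply hand
    refine ⟨h, ?_, hh⟩
    have hle : |h| ≤ |a| := by
      rw [hh, abs_nsmul]
      calc |h| = 1 • |h| := (one_nsmul _).symm
        _ ≤ n • |h| := nsmul_le_nsmul_left (abs_nonneg h) hn
    exact absmem h (hconv _ habsC _ (abs_nonneg h) hle)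
  · intro c hc
    have ha0 : a ≠ 0 := by
      rintro rfl
      exact hand ⟨0, zero_mem C, by simp⟩
    have hp0 : 0 < |a| := abs_pos.mpr ha0
    obtain ⟨c0, hc0, hc0c, hc0p⟩ : ∃ c0 : G, 0 < c0 ∧ c0 ≤ c ∧ c0 ≤ |a| :=
      ⟨min c |a|, lt_min hc hp0, min_le_left _ _, min_le_right _ _⟩
    have hSC : Set.Ioo (a - c0) (a + c0) ⊆ (C : Set G) := by
      intro x hx
      obtain ⟨hx1, hx2⟩ := hx
      have hA : x - a < c0 := sub_lt_iff_lt_add'.mpr hx2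
      have hB : a - x < c0 := sub_lt_comm.mp hx1
      have h1 : |x - a| ≤ |a| := by
        rw [abs_sub_comm, abs_le]
        exact ⟨le_trans (neg_le_neg hc0p) (by simpa using (neg_lt_neg hA).le.trans (le_of_eq (neg_sub x a))), hB.le.trans hc0p⟩
      have h3 : x - a ∈ C := absmem _ (hconv _ habsC _ (abs_nonneg _) h1)
      have := AddSubgroup.add_mem C h3 haC
      simpa using this
    have hSinf : (Set.Ioo (a - c0) (a + c0)).Infinite :=
      Set.Ioo_infinite ((sub_lt_self a hc0).trans (lt_add_of_pos_right a hc0))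
    have hSconv : ∀ x ∈ Set.Ioo (a - c0) (a + c0), ∀ y ∈ Set.Ioo (a - c0) (a + c0),
        ∀ z ∈ C, x ≤ z → z ≤ y → z ∈ Set.Ioo (a - c0) (a + c0) := by
      intro x hx y hy z _ hxz hzy
      exact ⟨lt_of_lt_of_le hx.1 hxz, lt_of_le_of_lt hzy hy.2⟩
    obtain ⟨s, hsS, z, _, hsz⟩ := hreg _ hSC hSinf hSconv
    obtain ⟨hs1, hs2⟩ := hsS
    refine ⟨z, ?_⟩
    have h1 : |a - s| < c0 := by
      rw [abs_sub_lt_iff]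
      exact ⟨sub_lt_comm.mp hs1, sub_lt_iff_lt_add'.mpr hs2⟩
    rw [← hsz]
    exact lt_of_lt_of_le h1 hc0c
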